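/- arXiv:2504.09573 — 4 statements merged into one kernel-verified Lean document; each statement's English description precedes it below -/
import Mathlib

section
/- For every integer t ≥ 2 and every integer d with 1 ≤ d ≤ t/2, there exists g ∈ G^{(t)} such that d/2 ≤ g ≤ d, where G^{(t)} is the dynamic geometric grid. -/
/-- Left grid element of the dynamic geometric grid. -/
def gL (t j : ℕ) : ℕ := 2 ^ j + (t - 1) % 2 ^ (j - 1)

/-- Right grid element of the dynamic geometric grid. -/
def gR (t j : ℕ) : ℕ := gL t j + 2 ^ (j - 1)

/-- The dynamic geometric grid `G^{(t)}`. -/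
def dynGrid (t : ℕ) : Finset ℕ :=
  {1} ∪ (Finset.Icc 1 (Nat.log 2 ((t - 1) / 3) + 1)).image (gL t)
      ∪ (Finset.Icc 1 (Nat.log 2 (t - 1) - 1)).image (gR t)

lemma one_mem_dynGrid (t : ℕ) : 1 ∈ dynGrid t := by
  simp [dynGrid]

lemma gL_mem_dynGrid (t j : ℕ) (h1 : 1 ≤ j) (h2 : j ≤ Nat.log 2 ((t - 1) / 3) + 1) :
    gL t j ∈ dynGrid t := by
  simp only [dynGrid, Finset.mem_union, Finset.mem_image, Finset.mem_Icc]
  exact Or.inl (Or.inr ⟨j, ⟨h1, h2⟩, rfl⟩)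

lemma gR_mem_dynGrid (t j : ℕ) (h1 : 1 ≤ j) (h2 : j ≤ Nat.log 2 (t - 1) - 1) :
    gR t j ∈ dynGrid t := by
  simp only [dynGrid, Finset.mem_union, Finset.mem_image, Finset.mem_Icc]
  exact Or.inr ⟨j, ⟨h1, h2⟩, rfl⟩

theorem grid_geometric_spacing (t d : ℕ) (ht : 2 ≤ t) (hd1 : 1 ≤ d) (hd2 : 2 * d ≤ t) :
    ∃ g ∈ dynGrid t, d ≤ 2 * g ∧ g ≤ d := by
  rcases le_or_gt d 2 with hd | hd
  · exact ⟨1, one_mem_dynGrid t, by omega, hd1⟩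
  -- d ≥ 3
  set j := Nat.log 2 d with hjdef
  have hdlow : 2 ^ j ≤ d := Nat.pow_log_le_self 2 (by omega)
  have hdhigh : d < 2 ^ (j + 1) := Nat.lt_pow_succ_log_self (by norm_num) d
  have hj1 : 1 ≤ j := by
    have : 2 ^ 1 ≤ d := by omega
    exact (Nat.le_log_iff_pow_le (by norm_num) (by omega)).mpr this
  have e1 : 2 ^ j = 2 * 2 ^ (j - 1) := by
    conv_lhs => rw [show j = (j - 1) + 1 by omega]
    ring
  have e2 : 2 ^ (j + 1) = 2 * 2 ^ j := by ring
  have hm1 : (t - 1) % 2 ^ (j - 1) < 2 ^ (j - 1) :=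
    Nat.mod_lt _ (Nat.pow_pos (by norm_num))
  have hp1 : 1 ≤ 2 ^ (j - 1) := Nat.one_le_two_pow
  by_cases hA : gR t j ≤ d
  · -- take gR t j
    refine ⟨gR t j, gR_mem_dynGrid t j hj1 ?_, ?_, hA⟩
    · have hgr : 2 ^ j + 2 ^ (j - 1) ≤ gR t j := by unfold gR gL; omega
      have h2j : 2 ^ (j + 1) ≤ t - 1 := by omega
      have := (Nat.le_log_iff_pow_le (by norm_num) (show t - 1 ≠ 0 by omega)).mpr h2j
      omega
    · have hgr : 2 ^ j ≤ gR t j := by unfold gR gL; omega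
      omega
  · by_cases hB : gL t j ≤ d
    · -- take gL t j
      refine ⟨gL t j, gL_mem_dynGrid t j hj1 ?_, ?_, hB⟩
      · have hgl : 2 ^ j ≤ gL t j := by unfold gL; omega
        have h3 : 3 * 2 ^ (j - 1) ≤ t - 1 := by omega
        have hdiv : 2 ^ (j - 1) ≤ (t - 1) / 3 :=
          (Nat.le_div_iff_mul_le (by norm_num)).mpr (by omega)
        have := (Nat.le_log_iff_pow_le (by norm_num)
          (show (t - 1) / 3 ≠ 0 by omega)).mpr hdiv
        omega
      · have hgl : 2 ^ j ≤ gL t j := by unfold gL; omega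
        omega
    · -- take gR t (j - 1)
      have hm : 0 < (t - 1) % 2 ^ (j - 1) := by
        unfold gL at hB; omega
      have hj2 : 2 ≤ j := by
        by_contra h
        have hj' : j = 1 := by omega
        rw [hj'] at hm
        simp [Nat.mod_one] at hm
      have e3 : 2 ^ (j - 1) = 2 * 2 ^ (j - 2) := by
        conv_lhs => rw [show j - 1 = (j - 2) + 1 by omega]
        ring
      have hm2 : (t - 1) % 2 ^ (j - 2) < 2 ^ (j - 2) :=
        Nat.mod_lt _ (Nat.pow_pos (by norm_num))
      have hgr : gR t (j - 1) = 2 ^ (j - 1) + (t - 1) % 2 ^ (j - 2) + 2 ^ (j - 2) := by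
        unfold gR gL
        rw [show j - 1 - 1 = j - 2 by omega]
      have hdlt : d < 2 ^ j + 2 ^ (j - 1) := by
        unfold gL at hB; omega
      refine ⟨gR t (j - 1), gR_mem_dynGrid t (j - 1) (by omega) ?_, by omega, by omega⟩
      have h2j : 2 ^ j ≤ t - 1 := by omega
      have := (Nat.le_log_iff_pow_le (by norm_num) (show t - 1 ≠ 0 by omega)).mpr h2j
      omega
end

section
/- For every integer t ≥ 2, the dynamic geometric grid satisfies the recycling property: (G^{(t+1)} \ {1}) − 1 ⊆ G^{(t)}, i.e., for every g ∈ G^{(t+1)} with g > 1, the integer g − 1 belongs to G^{(t)}. Equivalently, { t+1−g : g ∈ G^{(t+1)} } ⊆ { t−g : g ∈ G^{(t)} } ∪ {t}. -/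
lemma mod_pred_of_pos {t n : ℕ} (h : 0 < t % n) : (t - 1) % n = t % n - 1 := by
  rcases Nat.eq_zero_or_pos n with rfl | hn
  · simp
  · have hd := Nat.div_add_mod t n
    have hlt := Nat.mod_lt t hn
    have he : t - 1 = (t % n - 1) + n * (t / n) := by omega
    rw [he, Nat.add_mul_mod_self_left, Nat.mod_eq_of_lt (by omega)]

lemma mod_pred_of_dvd {t n : ℕ} (hn : 0 < n) (ht : 0 < t) (h : t % n = 0) :
    (t - 1) % n = n - 1 := by
  obtain ⟨k, rfl⟩ := Nat.dvd_of_mod_eq_zero h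
  rcases k with _ | k
  · simp at ht
  · have he : n * (k + 1) - 1 = (n - 1) + n * k := by
      rw [Nat.mul_succ]; omega
    rw [he, Nat.add_mul_mod_self_left, Nat.mod_eq_of_lt (by omega)]

theorem grid_recycling (t : ℕ) (ht : 2 ≤ t) :
    ∀ g ∈ dynGrid (t + 1), 1 < g → g - 1 ∈ dynGrid t := by
  intro g hg hg1
  simp only [dynGrid, Finset.mem_union, Finset.mem_singleton, Finset.mem_image,
    Finset.mem_Icc, Nat.add_sub_cancel] at hg ⊢
  rcases hg with (rfl | ⟨j, ⟨hj1, hj2⟩, rfl⟩) | ⟨j, ⟨hj1, hj2⟩, rfl⟩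
  · omega
  · -- g = gL (t+1) j = 2^j + t % 2^(j-1)
    rcases eq_or_lt_of_le hj1 with rfl | hj2'
    · -- j = 1 : g = 2, g - 1 = 1
      left; left
      simp [gL, Nat.mod_one]
    · have hj : 2 ≤ j := hj2'
      have hpow1 : 0 < 2 ^ (j - 1) := pow_pos (by norm_num) _
      have hpow0 : 0 < 2 ^ (j - 2) := pow_pos (by norm_num) _
      have hlog : 2 ^ (j - 1) ≤ t / 3 := by
        apply Nat.pow_le_of_le_log
        · have : 2 ^ (j - 1) ≤ t / 3 → t / 3 ≠ 0 := fun h => by omega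
          -- need t / 3 ≠ 0: since j - 1 ≥ 1 ≤ log 2 (t/3)
          intro h0
          rw [h0, Nat.log_zero_right] at hj2
          omega
        · omega
      have h3t : 3 * 2 ^ (j - 1) ≤ t := by
        have := Nat.div_mul_le_self t 3
        calc 3 * 2 ^ (j - 1) ≤ 3 * (t / 3) := by omega
        _ ≤ t := by omega
      rcases Nat.eq_zero_or_pos (t % 2 ^ (j - 1)) with hr | hr
      · -- g = 2^j, g - 1 = 2^j - 1 = gR t (j-1)
        right
        refine ⟨j - 1, ⟨by omega, ?_⟩, ?_⟩
        · -- j ≤ log 2 (t - 1)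
          have h2j : 2 ^ j ≤ t - 1 := by
            have e : j = (j - 1) + 1 := by omega
            rw [e, pow_succ]
            omega
          have := Nat.le_log_of_pow_le (by norm_num : 1 < 2) h2j
          omega
        · have hdvd : 2 ^ (j - 2) ∣ t :=
            (pow_dvd_pow 2 (by omega : j - 2 ≤ j - 1)).trans (Nat.dvd_of_mod_eq_zero hr)
          have hm : (t - 1) % 2 ^ (j - 2) = 2 ^ (j - 2) - 1 :=
            mod_pred_of_dvd hpow0 (by omega) (Nat.mod_eq_zero_of_dvd hdvd)
          have hjj : j - 1 - 1 = j - 2 := by omega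
          simp only [gR, gL, hjj, Nat.add_sub_cancel, hr, hm]
          have e1 : 2 * 2 ^ (j - 2) = 2 ^ (j - 1) := by
            rw [← pow_succ']; congr 1; omega
          have e2 : 2 * 2 ^ (j - 1) = 2 ^ j := by
            rw [← pow_succ']; congr 1; omega
          omega
      · -- g - 1 = gL t j
        left; right
        refine ⟨j, ⟨hj1, ?_⟩, ?_⟩
        · -- j ≤ log 2 ((t-1)/3) + 1
          have hne : t ≠ 3 * 2 ^ (j - 1) := by
            intro he
            rw [he, Nat.mul_mod_left] at hr
            omega
          have h1 : 2 ^ (j - 1) ≤ (t - 1) / 3 := by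
            rw [Nat.le_div_iff_mul_le (by norm_num)]
            omega
          have := Nat.le_log_of_pow_le (by norm_num : 1 < 2) h1
          omega
        · simp only [gL, Nat.add_sub_cancel, mod_pred_of_pos hr]
          exact (Nat.add_sub_assoc hr _).symm
  · -- g = gR (t+1) j
    rcases eq_or_lt_of_le hj1 with rfl | hj2'
    · -- j = 1 : g = 3, g - 1 = 2 = gL t 1
      left; right
      refine ⟨1, ⟨le_refl 1, by omega⟩, ?_⟩
      simp [gL, gR, Nat.mod_one]
    · have hj : 2 ≤ j := hj2'
      have hpow1 : 0 < 2 ^ (j - 1) := pow_pos (by norm_num) _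
      have hlogt : 1 ≤ Nat.log 2 t := by omega
      have h2j1 : 2 ^ (j + 1) ≤ t := by
        apply Nat.pow_le_of_le_log (by omega)
        omega
      have hpj1 : 2 ^ (j + 1) = 4 * 2 ^ (j - 1) := by
        have e : j + 1 = (j - 1) + 2 := by omega
        rw [e, pow_add]; ring
      rcases Nat.eq_zero_or_pos (t % 2 ^ (j - 1)) with hr | hr
      · -- g = 3 * 2^(j-1), g - 1 = gL t j
        left; right
        refine ⟨j, ⟨by omega, ?_⟩, ?_⟩
        · have h1 : 2 ^ (j - 1) ≤ (t - 1) / 3 := by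
            rw [Nat.le_div_iff_mul_le (by norm_num)]
            omega
          have := Nat.le_log_of_pow_le (by norm_num : 1 < 2) h1
          omega
        · simp only [gR, gL, Nat.add_sub_cancel, mod_pred_of_dvd hpow1 (by omega) hr, hr]
          omega
      · -- g - 1 = gR t j
        right
        refine ⟨j, ⟨hj1, ?_⟩, ?_⟩
        · have hne : t ≠ 2 ^ (j + 1) := by
            intro he
            have hdvd : 2 ^ (j - 1) ∣ 2 ^ (j + 1) := pow_dvd_pow 2 (by omega)
            rw [he, Nat.mod_eq_zero_of_dvd hdvd] at hr
            omega
          have h1 : 2 ^ (j + 1) ≤ t - 1 := by omega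
          have := Nat.le_log_of_pow_le (by norm_num : 1 < 2) h1
          omega
        · simp only [gR, gL, Nat.add_sub_cancel, mod_pred_of_pos hr]
          omega
end

section
/- Let t and τ be positive integers with τ < t ≤ 2τ, and let g be an integer with (t−τ)/2 ≤ g ≤ t−τ. Then g·τ²/(t·(t−g)) ≥ (t−τ)/8, and consequently τ/(t−g) ≥ 2/3. -/
theorem signal_preservation (t τ g : ℕ) (hτ : 0 < τ) (hτt : τ < t) (ht : t ≤ 2 * τ)
    (hg1 : ((t : ℝ) - (τ : ℝ)) / 2 ≤ (g : ℝ)) (hg2 : g ≤ t - τ) :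
    ((g : ℝ) * (τ : ℝ) ^ 2 / ((t : ℝ) * ((t : ℝ) - (g : ℝ))) ≥ ((t : ℝ) - (τ : ℝ)) / 8) ∧
      ((τ : ℝ) / ((t : ℝ) - (g : ℝ)) ≥ 2 / 3) := by
  have hgt : g + τ ≤ t := by omega
  have hgt' : (g : ℝ) + (τ : ℝ) ≤ (t : ℝ) := by exact_mod_cast hgt
  have hτt' : (τ : ℝ) < (t : ℝ) := by exact_mod_cast hτt
  have ht' : (t : ℝ) ≤ 2 * (τ : ℝ) := by exact_mod_cast ht
  have hτ' : (0 : ℝ) < τ := by exact_mod_cast hτ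
  have htpos : (0 : ℝ) < t := lt_trans hτ' hτt'
  have htg : (0 : ℝ) < (t : ℝ) - (g : ℝ) := by linarith
  constructor
  · rw [ge_iff_le, div_le_div_iff₀ (by norm_num) (by positivity)]
    nlinarith [sq_nonneg ((t:ℝ) - τ), sq_nonneg ((t:ℝ) - 2*τ), mul_pos htpos htg,
      mul_nonneg (sub_nonneg.2 hτt'.le) (sub_nonneg.2 ht')]
  · rw [ge_iff_le, div_le_div_iff₀ (by norm_num) htg]
    linarith
end

section
/- Let a ≥ 0 and let Z be a standard normal random variable. Define ν_a = E[Z² | |Z| ≥ a]. Then a² + 1 ≤ ν_a ≤ a² + 2. -/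
open MeasureTheory ProbabilityTheory Real Set Filter
open scoped ENNReal NNReal

namespace TGSM

noncomputable def phi (x : ℝ) : ℝ := (Real.sqrt (2 * Real.pi))⁻¹ * Real.exp (-x ^ 2 / 2)

lemma phi_eq : gaussianPDFReal 0 1 = phi := by
  funext x
  simp [gaussianPDFReal, phi]

lemma phi_even (x : ℝ) : phi (-x) = phi x := by simp [phi]

lemma phi_pos (x : ℝ) : 0 < phi x := by
  have h : 0 < Real.sqrt (2 * Real.pi) := Real.sqrt_pos.2 (by positivity)
  exact mul_pos (inv_pos.2 h) (Real.exp_pos _)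

lemma phi_nonneg (x : ℝ) : 0 ≤ phi x := (phi_pos x).le

lemma continuous_phi : Continuous phi := by
  unfold phi; fun_prop

lemma phi_exp (x : ℝ) : phi x = (Real.sqrt (2 * Real.pi))⁻¹ * Real.exp (-(1/2 : ℝ) * x ^ 2) := by
  unfold phi; ring_nf

lemma integrable_phi : Integrable phi := by
  have := (integrable_exp_neg_mul_sq (by norm_num : (0:ℝ) < 1/2)).const_mul
    ((Real.sqrt (2 * Real.pi))⁻¹)
  refine this.congr (Filter.Eventually.of_forall fun x => ?_)
  rw [phi_exp]

lemma integrable_mul_phi : Integrable (fun x => x * phi x) := by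
  have := (integrable_mul_exp_neg_mul_sq (by norm_num : (0:ℝ) < 1/2)).const_mul
    ((Real.sqrt (2 * Real.pi))⁻¹)
  refine this.congr (Filter.Eventually.of_forall fun x => ?_)
  simp only [phi_exp]; ring

lemma integrable_sq_phi : Integrable (fun x => x ^ 2 * phi x) := by
  have := (integrable_rpow_mul_exp_neg_mul_sq (by norm_num : (0:ℝ) < 1/2)
    (by norm_num : (-1:ℝ) < 2)).const_mul ((Real.sqrt (2 * Real.pi))⁻¹)
  refine this.congr (Filter.Eventually.of_forall fun x => ?_)
  simp only [phi_exp, Real.rpow_two]; ring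

lemma tendsto_phi : Tendsto phi atTop (nhds 0) := by
  have h1 : Tendsto (fun x : ℝ => -x ^ 2 / 2) atTop atBot := by
    apply Filter.Tendsto.atBot_div_const (by norm_num : (0:ℝ) < 2)
    exact tendsto_neg_atBot_iff.2 (tendsto_pow_atTop two_ne_zero)
  have h2 : Tendsto (fun x : ℝ => Real.exp (-x ^ 2 / 2)) atTop (nhds 0) :=
    Real.tendsto_exp_atBot.comp h1
  have := h2.const_mul ((Real.sqrt (2 * Real.pi))⁻¹)
  rw [mul_zero] at this
  exact this

lemma tendsto_mul_phi : Tendsto (fun x => x * phi x) atTop (nhds 0) := by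
  have hlo := rpow_mul_exp_neg_mul_sq_isLittleO_exp_neg (by norm_num : (0:ℝ) < 1/2) 1
  have hexp : Tendsto (fun x : ℝ => Real.exp (-(1/2) * x)) atTop (nhds 0) := by
    have hhalf : Tendsto (fun x : ℝ => (1/2) * x) atTop atTop :=
      tendsto_id.const_mul_atTop (by norm_num)
    have := Real.tendsto_exp_atBot.comp (tendsto_neg_atTop_atBot.comp hhalf)
    refine this.congr fun x => ?_
    simp [Function.comp, neg_mul]
  have h0 : Tendsto (fun x : ℝ => x ^ (1:ℝ) * Real.exp (-(1/2) * x ^ 2)) atTop (nhds 0) :=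
    hlo.tendsto_zero_of_tendsto hexp
  have := h0.const_mul ((Real.sqrt (2 * Real.pi))⁻¹)
  rw [mul_zero] at this
  refine this.congr fun x => ?_
  rw [phi_exp, Real.rpow_one]; ring

lemma hasDerivAt_phi (x : ℝ) : HasDerivAt phi (-x * phi x) x := by
  have h1 : HasDerivAt (fun x : ℝ => -x ^ 2 / 2) (-x) x := by
    have := ((hasDerivAt_pow 2 x).fun_neg).div_const 2
    exact this.congr_deriv (by norm_num; ring)
  have h2 := h1.exp
  have h3 := h2.const_mul ((Real.sqrt (2 * Real.pi))⁻¹)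
  exact h3.congr_deriv (by unfold phi; ring)

lemma hasDerivAt_mul_phi (x : ℝ) :
    HasDerivAt (fun x => x * phi x) ((1 - x ^ 2) * phi x) x := by
  have := (hasDerivAt_id x).fun_mul (hasDerivAt_phi x)
  exact this.congr_deriv (by simp only [id_eq]; ring)

lemma integral_mul_phi (a : ℝ) : ∫ x in Ioi a, x * phi x = phi a := by
  have h := integral_Ioi_of_hasDerivAt_of_tendsto
    (f := fun x => -phi x) (f' := fun x => x * phi x) (a := a)
    ((continuous_phi.neg).continuousWithinAt)
    (fun x _ => by simpa using (hasDerivAt_phi x).fun_neg)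
    integrable_mul_phi.integrableOn
    (by simpa using tendsto_phi.neg)
  simpa using h

lemma integral_sub_one_mul_phi (a : ℝ) :
    ∫ x in Ioi a, (x ^ 2 - 1) * phi x = a * phi a := by
  have hint : IntegrableOn (fun x => (x ^ 2 - 1) * phi x) (Ioi a) := by
    refine ((integrable_sq_phi.sub integrable_phi).congr
      (Filter.Eventually.of_forall fun x => by simp only [Pi.sub_apply]; ring)).integrableOn
  have h := integral_Ioi_of_hasDerivAt_of_tendsto
    (f := fun x => -(x * phi x)) (f' := fun x => (x ^ 2 - 1) * phi x) (a := a)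
    (((continuous_id.mul continuous_phi).neg).continuousWithinAt)
    (fun x _ => by
      have := (hasDerivAt_mul_phi x).fun_neg
      convert this using 1
      ring)
    hint
    (by simpa using tendsto_mul_phi.neg)
  simpa using h

lemma key_identity (a : ℝ) :
    ∫ x in Ioi a, phi x * x ^ 2 = a * phi a + ∫ x in Ioi a, phi x := by
  have h1 : ∫ x in Ioi a, (x ^ 2 - 1) * phi x
      = (∫ x in Ioi a, phi x * x ^ 2) - ∫ x in Ioi a, phi x := by
    rw [show (fun x => (x ^ 2 - 1) * phi x) = fun x => phi x * x ^ 2 - phi x from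
      funext fun x => by ring]
    exact integral_sub
      ((integrable_sq_phi.congr (Filter.Eventually.of_forall fun x => by ring)).integrableOn)
      integrable_phi.integrableOn
  have h2 := integral_sub_one_mul_phi a
  linarith [h1 ▸ h2]

lemma mills_lower {a : ℝ} (ha : 0 ≤ a) : a * ∫ x in Ioi a, phi x ≤ phi a := by
  rw [← integral_mul_phi a, ← integral_const_mul]
  refine setIntegral_mono_on
    (integrable_phi.integrableOn.const_mul a)
    integrable_mul_phi.integrableOn
    measurableSet_Ioi (fun x hx => ?_)
  exact mul_le_mul_of_nonneg_right (le_of_lt hx) (phi_nonneg x)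

lemma mills_upper {a : ℝ} (ha : 0 ≤ a) :
    a * phi a ≤ (a ^ 2 + 1) * ∫ x in Ioi a, phi x := by
  have hden : ∀ x : ℝ, (x ^ 2 + 1) ≠ 0 := fun x => by positivity
  have hg : ∀ x : ℝ, HasDerivAt (fun x => -(x / (x ^ 2 + 1) * phi x))
      ((1 - 2 / (x ^ 2 + 1) ^ 2) * phi x) x := by
    intro x
    have hq : HasDerivAt (fun x : ℝ => x / (x ^ 2 + 1))
        ((1 * (x ^ 2 + 1) - x * (2 * x ^ 1)) / (x ^ 2 + 1) ^ 2) x :=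
      (hasDerivAt_id x).div (by simpa using (hasDerivAt_pow 2 x).add_const 1) (hden x)
    have := (hq.fun_mul (hasDerivAt_phi x)).fun_neg
    have h := hden x
    exact this.congr_deriv (by field_simp; ring)
  have hcont1 : Continuous fun x : ℝ => x / (x ^ 2 + 1) :=
    continuous_id.div (by continuity) hden
  have hcontg : Continuous fun x : ℝ => -(x / (x ^ 2 + 1) * phi x) :=
    (hcont1.mul continuous_phi).neg
  have habs : ∀ x : ℝ, |1 - 2 / (x ^ 2 + 1) ^ 2| ≤ 1 := by
    intro x
    have h1 : (0:ℝ) < (x ^ 2 + 1) ^ 2 := by positivity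
    have h2 : (2:ℝ) / (x ^ 2 + 1) ^ 2 ≤ 2 := by
      rw [div_le_iff₀ h1]; nlinarith [sq_nonneg x]
    have h3 : (0:ℝ) ≤ 2 / (x ^ 2 + 1) ^ 2 := by positivity
    rw [abs_le]; constructor <;> linarith
  have hint : IntegrableOn (fun x => (1 - 2 / (x ^ 2 + 1) ^ 2) * phi x) (Ioi a) := by
    refine Integrable.mono' integrable_phi.integrableOn ?_
      (Filter.Eventually.of_forall fun x => ?_)
    · exact Continuous.aestronglyMeasurable
        (((continuous_const.sub (continuous_const.div (by continuity)
          (fun x => by positivity))).mul continuous_phi))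
    · rw [Real.norm_eq_abs, abs_mul, abs_of_nonneg (phi_nonneg x)]
      exact mul_le_of_le_one_left (phi_nonneg x) (habs x)
  have htend : Tendsto (fun x : ℝ => -(x / (x ^ 2 + 1) * phi x)) atTop (nhds 0) := by
    refine squeeze_zero_norm (fun x => ?_) tendsto_phi
    rw [norm_neg, norm_mul, Real.norm_eq_abs, Real.norm_eq_abs,
      abs_of_nonneg (phi_nonneg x)]
    refine mul_le_of_le_one_left (phi_nonneg x) ?_
    rw [abs_div, abs_of_nonneg (by positivity : (0:ℝ) ≤ x ^ 2 + 1), div_le_one (by positivity)]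
    nlinarith [sq_abs x, sq_nonneg (|x| - 1)]
  have hFTC := integral_Ioi_of_hasDerivAt_of_tendsto
    (f := fun x => -(x / (x ^ 2 + 1) * phi x))
    (f' := fun x => (1 - 2 / (x ^ 2 + 1) ^ 2) * phi x) (a := a)
    hcontg.continuousWithinAt (fun x _ => hg x) hint htend
  have hmono : ∫ x in Ioi a, (1 - 2 / (x ^ 2 + 1) ^ 2) * phi x ≤ ∫ x in Ioi a, phi x := by
    refine setIntegral_mono_on hint integrable_phi.integrableOn measurableSet_Ioi
      (fun x _ => ?_)
    have h3 : (0:ℝ) ≤ 2 / (x ^ 2 + 1) ^ 2 := by positivity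
    nlinarith [phi_nonneg x]
  rw [hFTC] at hmono
  have ha2 : (0:ℝ) < a ^ 2 + 1 := by positivity
  rw [zero_sub, neg_neg] at hmono
  calc a * phi a = (a ^ 2 + 1) * (a / (a ^ 2 + 1) * phi a) := by field_simp
    _ ≤ (a ^ 2 + 1) * ∫ x in Ioi a, phi x :=
      mul_le_mul_of_nonneg_left hmono ha2.le

lemma Q_pos (a : ℝ) : 0 < ∫ x in Ioi a, phi x := by
  rw [setIntegral_pos_iff_support_of_nonneg_ae
    (Filter.Eventually.of_forall fun x => phi_nonneg x) integrable_phi.integrableOn]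
  have hs : Function.support phi ∩ Ioi a = Ioi a :=
    inter_eq_self_of_subset_right (fun x _ => (phi_pos x).ne')
  rw [hs, Real.volume_Ioi]
  exact ENNReal.zero_lt_top

lemma set_ae_eq {a : ℝ} (ha : 0 ≤ a) :
    {x : ℝ | a ≤ |x|} =ᵐ[volume] ((Iic (-a) ∪ Ioi a : Set ℝ)) := by
  rw [MeasureTheory.ae_eq_set]
  constructor
  · refine measure_mono_null (fun x hx => ?_) (Real.volume_singleton (a := a))
    simp only [mem_diff, mem_setOf_eq, mem_union, mem_Iic, mem_Ioi, not_or, not_le,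
      not_lt] at hx
    obtain ⟨h1, h2, h3⟩ := hx
    simp only [mem_singleton_iff]
    rcases abs_cases x with ⟨he, _⟩ | ⟨he, hneg⟩
    · rw [he] at h1; linarith
    · rw [he] at h1; linarith
  · refine measure_mono_null (fun x hx => ?_) (measure_empty (μ := volume))
    simp only [mem_diff, mem_union, mem_Iic, mem_Ioi, mem_setOf_eq] at hx
    obtain ⟨h1, h2⟩ := hx
    exfalso; apply h2
    rcases h1 with h | h
    · calc a ≤ -x := by linarith
        _ ≤ |x| := neg_le_abs x
    · exact le_trans h.le (le_abs_self x)

lemma split_integral {a : ℝ} (ha : 0 ≤ a) (f : ℝ → ℝ) (hf : Integrable f)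
    (heven : ∀ x, f (-x) = f x) :
    ∫ x in {x : ℝ | a ≤ |x|}, f x = 2 * ∫ x in Ioi a, f x := by
  rw [setIntegral_congr_set (set_ae_eq ha),
    setIntegral_union (Iic_disjoint_Ioi (neg_le_self ha)) measurableSet_Ioi
      hf.integrableOn hf.integrableOn]
  have h1 : ∫ x in Iic (-a), f x = ∫ x in Ioi a, f x := by
    have := integral_comp_neg_Iic (-a) f
    rw [neg_neg] at this
    rw [← this]
    exact setIntegral_congr_fun measurableSet_Iic fun x _ => (heven x).symm
  rw [h1]; ring

end TGSM

open TGSM in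
theorem truncated_gaussian_second_moment (a : ℝ) (ha : 0 ≤ a) :
    a ^ 2 + 1 ≤ (∫ x in {x : ℝ | a ≤ |x|}, x ^ 2 ∂(gaussianReal 0 1)) /
        ((gaussianReal 0 1) {x : ℝ | a ≤ |x|}).toReal ∧
      (∫ x in {x : ℝ | a ≤ |x|}, x ^ 2 ∂(gaussianReal 0 1)) /
        ((gaussianReal 0 1) {x : ℝ | a ≤ |x|}).toReal ≤ a ^ 2 + 2 := by
  have hS : MeasurableSet {x : ℝ | a ≤ |x|} :=
    measurableSet_le measurable_const continuous_abs.measurable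
  set Q := ∫ x in Set.Ioi a, phi x with hQdef
  have hQ := Q_pos a
  have hmeas : ((gaussianReal 0 1) {x : ℝ | a ≤ |x|}).toReal = 2 * Q := by
    rw [gaussianReal_apply_eq_integral 0 one_ne_zero,
      ENNReal.toReal_ofReal (setIntegral_nonneg hS fun x _ => by
        rw [phi_eq]; exact phi_nonneg x)]
    rw [show (fun x => gaussianPDFReal 0 1 x) = phi from phi_eq]
    exact split_integral ha phi integrable_phi phi_even
  have hint : ∫ x in {x : ℝ | a ≤ |x|}, x ^ 2 ∂(gaussianReal 0 1)
      = 2 * ∫ x in Set.Ioi a, phi x * x ^ 2 := by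
    rw [gaussianReal_of_var_ne_zero 0 one_ne_zero]
    have hd : (volume : Measure ℝ).withDensity (gaussianPDF 0 1)
        = (volume : Measure ℝ).withDensity (fun x => ((phi x).toNNReal : ℝ≥0∞)) := by
      congr 1
      funext x
      rw [gaussianPDF, phi_eq]
      rfl
    rw [hd, setIntegral_withDensity_eq_setIntegral_smul
      (continuous_phi.measurable.real_toNNReal) _ hS]
    have he : ∫ x in {x : ℝ | a ≤ |x|}, (phi x).toNNReal • x ^ 2
        = ∫ x in {x : ℝ | a ≤ |x|}, phi x * x ^ 2 := by
      refine setIntegral_congr_fun hS fun x _ => ?_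
      rw [NNReal.smul_def, Real.coe_toNNReal _ (phi_nonneg x), smul_eq_mul]
    rw [he]
    exact split_integral ha _
      ((integrable_sq_phi.congr (Filter.Eventually.of_forall fun x => by ring)))
      (fun x => by rw [phi_even]; ring_nf)
  rw [hint, hmeas, key_identity a, ← hQdef,
    mul_div_mul_left _ _ (two_ne_zero)]
  constructor
  · rw [le_div_iff₀ hQ]
    have h1 := mul_le_mul_of_nonneg_left (mills_lower ha) ha
    nlinarith
  · rw [div_le_iff₀ hQ]
    have h2 := mills_upper ha
    nlinarith
end
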